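/- If q ≥ 5, 2 < m ≤ q - 1, and 1 ≤ k ≤ (m-1)/2, then q^m - 1 - Σ_{i=1}^{m-1} C(m-1,i)(q-1)^i - Σ_{i=1}^{k} C(m-1,i)(q-1)^i ≥ Σ_{i=1}^{k} C(m,i)(q-1)^i. -/

import Mathlib

lemma geom_aux (r k : ℕ) (hr : 2 ≤ r) :
    ∑ i ∈ Finset.Icc 1 k, r ^ i ≤ 2 * r ^ k := by
  induction k with
  | zero => simp
  | succ n ih =>
    rcases Nat.eq_zero_or_pos n with h | h
    · subst h; simp; omega
    · rw [Finset.sum_Icc_succ_top (by omega)]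
      have : 2 * r ^ n + r ^ (n + 1) ≤ 2 * r ^ (n + 1) := by
        have : 2 * r ^ n ≤ r ^ (n + 1) := by
          rw [pow_succ]
          calc 2 * r ^ n = r ^ n * 2 := by ring
          _ ≤ r ^ n * r := by exact Nat.mul_le_mul_left _ hr
        omega
      omega

lemma sum_bound (q n k : ℕ) (hn : n ≤ q - 1) (hq : 5 ≤ q) :
    ∑ i ∈ Finset.Icc 1 k, n.choose i * (q - 1) ^ i ≤ 2 * ((q - 1) ^ 2) ^ k := by
  calc ∑ i ∈ Finset.Icc 1 k, n.choose i * (q - 1) ^ i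
      ≤ ∑ i ∈ Finset.Icc 1 k, ((q - 1) ^ 2) ^ i := by
        apply Finset.sum_le_sum
        intro i _
        have h1 : n.choose i ≤ n ^ i := Nat.choose_le_pow n i
        have h2 : n ^ i ≤ (q - 1) ^ i := Nat.pow_le_pow_left hn i
        calc n.choose i * (q - 1) ^ i ≤ (q - 1) ^ i * (q - 1) ^ i :=
              Nat.mul_le_mul (le_trans h1 h2) le_rfl
          _ = ((q - 1) ^ 2) ^ i := by ring
    _ ≤ 2 * ((q - 1) ^ 2) ^ k := by
        apply geom_aux
        have h4 : 4 ≤ q - 1 := by omega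
        nlinarith

/-- If q ≥ 5, 2 < m ≤ q - 1 and 1 ≤ k ≤ (m-1)/2, then Condition (1) holds:
q^m - 1 - Σ_{i=1}^{m-1} C(m-1,i)(q-1)^i - Σ_{i=1}^{k} C(m-1,i)(q-1)^i ≥
Σ_{i=1}^{k} C(m,i)(q-1)^i. -/
theorem stmt11 (q m k : ℕ) (hq : 5 ≤ q) (hm1 : 2 < m) (hm2 : m ≤ q - 1)
    (hk1 : 1 ≤ k) (hk2 : k ≤ (m - 1) / 2) :
    ∑ i ∈ Finset.Icc 1 k, m.choose i * (q - 1) ^ i ≤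
      q ^ m - 1 - ∑ i ∈ Finset.Icc 1 (m - 1), (m - 1).choose i * (q - 1) ^ i -
        ∑ i ∈ Finset.Icc 1 k, (m - 1).choose i * (q - 1) ^ i := by
  have hq1 : 1 ≤ q - 1 := by omega
  -- Σ_{i=0}^{m-1} C(m-1,i)(q-1)^i = q^{m-1}
  have hbinom : ∑ i ∈ Finset.Icc 1 (m - 1), (m - 1).choose i * (q - 1) ^ i
      = q ^ (m - 1) - 1 := by
    have h := add_pow (q - 1) 1 (m - 1)
    simp only [one_pow, mul_one, Nat.cast_id] at h
    rw [show q - 1 + 1 = q by omega] at h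
    replace h := h.symm
    have hsplit : Finset.range (m - 1 + 1) = insert 0 (Finset.Icc 1 (m - 1)) := by
      ext x
      simp [Finset.mem_range, Finset.mem_Icc, Finset.mem_insert]
      omega
    rw [hsplit, Finset.sum_insert (by simp)] at h
    simp only [pow_zero, one_pow, Nat.choose_zero_right, mul_one, one_mul] at h
    have : ∑ i ∈ Finset.Icc 1 (m - 1), (q - 1) ^ i * (m - 1).choose i
        = ∑ i ∈ Finset.Icc 1 (m - 1), (m - 1).choose i * (q - 1) ^ i := by
      apply Finset.sum_congr rfl; intro i _; ring
    omega
  rw [hbinom]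
  have h2k : 2 * k ≤ m - 1 := by omega
  have hS1 : ∑ i ∈ Finset.Icc 1 k, m.choose i * (q - 1) ^ i
      ≤ 2 * ((q - 1) ^ 2) ^ k := sum_bound q m k hm2 hq
  have hS2 : ∑ i ∈ Finset.Icc 1 k, (m - 1).choose i * (q - 1) ^ i
      ≤ 2 * ((q - 1) ^ 2) ^ k := sum_bound q (m - 1) k (by omega) hq
  have hpow : ((q - 1) ^ 2) ^ k ≤ q ^ (m - 1) := by
    calc ((q - 1) ^ 2) ^ k = (q - 1) ^ (2 * k) := by rw [← pow_mul]
      _ ≤ (q - 1) ^ (m - 1) := Nat.pow_le_pow_right hq1 h2k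
      _ ≤ q ^ (m - 1) := Nat.pow_le_pow_left (by omega) _
  have hqm : q ^ m = q * q ^ (m - 1) := by
    conv_lhs => rw [show m = (m - 1) + 1 by omega]
    ring
  have h1 : 1 ≤ q ^ (m - 1) := Nat.one_le_pow _ _ (by omega)
  have hmain : 2 * ((q - 1) ^ 2) ^ k + 2 * ((q - 1) ^ 2) ^ k + q ^ (m - 1) ≤ q ^ m := by
    calc 2 * ((q - 1) ^ 2) ^ k + 2 * ((q - 1) ^ 2) ^ k + q ^ (m - 1)
        ≤ 2 * q ^ (m - 1) + 2 * q ^ (m - 1) + q ^ (m - 1) := by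
          have := Nat.mul_le_mul_left 2 hpow; omega
      _ = 5 * q ^ (m - 1) := by ring
      _ ≤ q * q ^ (m - 1) := Nat.mul_le_mul_right _ hq
      _ = q ^ m := hqm.symm
  omega
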